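/- arXiv:1803.03170 — 2 statements merged into one kernel-verified Lean document; each statement's English description precedes it below -/
import Mathlib

section
/- Let $0<\nu<1$, $a \in \mathbb{Z}$, $p : \mathbb{N}_a \to (0,\infty)$, and $F : \mathbb{N}_{a+1} \times \mathbb{R} \to [0,\infty)$. If $y : \mathbb{N}_{a-1} \to \mathbb{R}$ satisfies $p(t)\nabla y(t) = -\nabla_a^{-\nu} F(t, y(t-1))$ for all $t \in \mathbb{N}_a$, then $\nabla_{a-1}^{\nu}(p\nabla y)(t) + F(t, y(t-1)) = 0$ for all $t \in \mathbb{N}_{a+1}$. -/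
open Filter Finset

/-- Generalized rising function `x^{\overline r} = Γ(x+r)/Γ(x)` (with the usual
vanishing convention, since `Real.Gamma` vanishes at nonpositive integers and
division by zero is zero in Lean). -/
noncomputable def rfac (x r : ℝ) : ℝ := Real.Gamma (x + r) / Real.Gamma x

/-- Backward (nabla) difference. -/
def nbl (f : ℤ → ℝ) (t : ℤ) : ℝ := f t - f (t - 1)

/-- The `ν`-th order nabla fractional sum based at `a`. -/
noncomputable def nsum (ν : ℝ) (a : ℤ) (f : ℤ → ℝ) (t : ℤ) : ℝ :=
  (1 / Real.Gamma ν) * ∑ s ∈ Finset.Icc (a + 1) t, rfac ((t : ℝ) - (s : ℝ) + 1) (ν - 1) * f s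

/-- The `ν`-th order nabla fractional difference based at `a`, for `0 < ν < 1`. -/
noncomputable def ndiff (ν : ℝ) (a : ℤ) (f : ℤ → ℝ) (t : ℤ) : ℝ :=
  nbl (nsum (1 - ν) a f) t

/-! ### Auxiliary lemmas -/

noncomputable def Af (ν : ℝ) (j : ℕ) : ℝ := Real.Gamma (j + ν) / j.factorial
noncomputable def Bf (ν : ℝ) (k : ℕ) : ℝ := Real.Gamma (k + (1 - ν)) / k.factorial

lemma Af_succ {ν : ℝ} (hν : 0 < ν) (j : ℕ) :
    ((j:ℝ)+1) * Af ν (j+1) = ((j:ℝ)+ν) * Af ν j := by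
  have hx : (j:ℝ) + ν ≠ 0 := by positivity
  have hg : Real.Gamma ((↑(j+1):ℝ) + ν) = ((j:ℝ)+ν) * Real.Gamma ((j:ℝ)+ν) := by
    push_cast
    rw [show (j:ℝ)+1+ν = ((j:ℝ)+ν)+1 by ring, Real.Gamma_add_one hx]
  have hf : ((j+1).factorial : ℝ) = ((j:ℝ)+1) * j.factorial := by
    rw [Nat.factorial_succ]; push_cast; ring
  have hfz : (j.factorial : ℝ) ≠ 0 := Nat.cast_ne_zero.mpr j.factorial_ne_zero
  unfold Af
  rw [hg, hf]
  field_simp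

lemma Bf_succ {ν : ℝ} (hν : ν < 1) (k : ℕ) :
    ((k:ℝ)+1) * Bf ν (k+1) = ((k:ℝ)+1-ν) * Bf ν k := by
  have hx : (k:ℝ) + (1 - ν) ≠ 0 := by
    have hk : (0:ℝ) ≤ (k:ℝ) := Nat.cast_nonneg k
    have : (0:ℝ) < (k:ℝ) + (1 - ν) := by linarith
    exact ne_of_gt this
  have hg : Real.Gamma ((↑(k+1):ℝ) + (1-ν)) = ((k:ℝ)+(1-ν)) * Real.Gamma ((k:ℝ)+(1-ν)) := by
    push_cast
    rw [show (k:ℝ)+1+(1-ν) = ((k:ℝ)+(1-ν))+1 by ring, Real.Gamma_add_one hx]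
  have hf : ((k+1).factorial : ℝ) = ((k:ℝ)+1) * k.factorial := by
    rw [Nat.factorial_succ]; push_cast; ring
  have hfz : (k.factorial : ℝ) ≠ 0 := Nat.cast_ne_zero.mpr k.factorial_ne_zero
  unfold Bf
  rw [hg, hf]
  field_simp
  ring

lemma key1 {ν : ℝ} (h1 : 0 < ν) (h2 : ν < 1) (n : ℕ) :
    ∑ j ∈ range (n+1), Af ν j * Bf ν (n-j) = Real.Gamma ν * Real.Gamma (1-ν) := by
  induction n with
  | zero => simp [Af, Bf]
  | succ n ih =>
    have hmul : ((n:ℝ)+1) * ∑ j ∈ range (n+2), Af ν j * Bf ν (n+1-j)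
        = ((n:ℝ)+1) * ∑ j ∈ range (n+1), Af ν j * Bf ν (n-j) := by
      have expand : ∀ j ∈ range (n+2),
          ((n:ℝ)+1) * (Af ν j * Bf ν (n+1-j))
            = (j:ℝ) * Af ν j * Bf ν (n+1-j) + Af ν j * (((n+1-j:ℕ):ℝ) * Bf ν (n+1-j)) := by
        intro j hj
        rw [mem_range] at hj
        have : ((n+1-j:ℕ):ℝ) = (n:ℝ)+1-(j:ℝ) := by
          have : j ≤ n+1 := by omega
          push_cast [Nat.cast_sub this]
          ring
        rw [this]; ring
      rw [mul_sum, sum_congr rfl expand, sum_add_distrib]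
      have hS1 : ∑ j ∈ range (n+2), (j:ℝ) * Af ν j * Bf ν (n+1-j)
          = ∑ j ∈ range (n+1), ((j:ℝ)+ν) * (Af ν j * Bf ν (n-j)) := by
        rw [Finset.sum_range_succ']
        simp only [Nat.cast_zero, zero_mul]
        rw [add_zero]
        refine sum_congr rfl fun j hj => ?_
        have h1' : (n+1-(j+1)) = n - j := by omega
        rw [h1']
        push_cast
        rw [show ((j:ℝ)+1) * Af ν (j+1) * Bf ν (n-j) = (((j:ℝ)+1) * Af ν (j+1)) * Bf ν (n-j) by ring,
          Af_succ h1]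
        ring
      have hS2 : ∑ j ∈ range (n+2), Af ν j * (((n+1-j:ℕ):ℝ) * Bf ν (n+1-j))
          = ∑ j ∈ range (n+1), ((n:ℝ)+1-(j:ℝ)-ν) * (Af ν j * Bf ν (n-j)) := by
        rw [Finset.sum_range_succ]
        simp only [Nat.sub_self, Nat.cast_zero, zero_mul, mul_zero, add_zero]
        refine sum_congr rfl fun j hj => ?_
        rw [mem_range] at hj
        have h1' : n+1-j = (n-j)+1 := by omega
        rw [h1']
        have h2' : (((n-j)+1:ℕ):ℝ) = ((n-j:ℕ):ℝ)+1 := by push_cast; ring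
        rw [h2', Bf_succ h2]
        have h3' : ((n-j:ℕ):ℝ) = (n:ℝ)-(j:ℝ) := by
          have : j ≤ n := by omega
          push_cast [Nat.cast_sub this]
          ring
        rw [h3']; ring
      rw [hS1, hS2, ← sum_add_distrib, mul_sum]
      refine sum_congr rfl fun j hj => ?_
      ring
    have hne : ((n:ℝ)+1) ≠ 0 := by positivity
    have := mul_left_cancel₀ hne hmul
    rw [this, ih]

lemma key2 {ν : ℝ} (h1 : 0 < ν) (h2 : ν < 1) (r τ : ℤ) (hr : r ≤ τ) :
    ∑ s ∈ Icc r τ, Bf ν (τ-s).toNat * Af ν (s-r).toNat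
      = Real.Gamma ν * Real.Gamma (1-ν) := by
  rw [← key1 h1 h2 (τ-r).toNat]
  refine Finset.sum_nbij' (fun s => (s-r).toNat) (fun j => r + j) ?_ ?_ ?_ ?_ ?_
  · intro s hs; rw [mem_Icc] at hs; rw [mem_range]; omega
  · intro j hj; rw [mem_range] at hj; rw [mem_Icc]; omega
  · intro s hs; rw [mem_Icc] at hs; omega
  · intro j hj; omega
  · intro s hs
    rw [mem_Icc] at hs
    have e1 : (τ - s).toNat = (τ-r).toNat - (s-r).toNat := by omega
    rw [e1, mul_comm]

lemma rfacA {ν : ℝ} (m : ℕ) : rfac ((m:ℝ)+1) (ν-1) = Af ν m := by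
  unfold rfac Af
  rw [show (m:ℝ)+1+(ν-1) = (m:ℝ)+ν by ring, Real.Gamma_nat_eq_factorial]

lemma rfacB {ν : ℝ} (m : ℕ) : rfac ((m:ℝ)+1) ((1-ν)-1) = Bf ν m := by
  unfold rfac Bf
  rw [show (m:ℝ)+1+((1-ν)-1) = (m:ℝ)+(1-ν) by ring, Real.Gamma_nat_eq_factorial]

lemma sum_swap_Icc (a τ : ℤ) (G : ℤ → ℤ → ℝ) :
    ∑ s ∈ Icc a τ, ∑ r ∈ Icc (a+1) s, G s r
      = ∑ r ∈ Icc (a+1) τ, ∑ s ∈ Icc r τ, G s r := by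
  rw [Finset.sum_sigma', Finset.sum_sigma']
  refine Finset.sum_nbij' (fun x => ⟨x.2, x.1⟩) (fun x => ⟨x.2, x.1⟩) ?_ ?_ (fun _ _ => rfl)
    (fun _ _ => rfl) (fun _ _ => rfl) <;>
  simp only [Finset.mem_Icc, Sigma.forall, Finset.mem_sigma] <;>
  rintro a b ⟨⟨h₁, h₂⟩, ⟨h₃, h₄⟩⟩ <;>
  omega

theorem stmt9 (ν : ℝ) (h1 : 0 < ν) (h2 : ν < 1) (a : ℤ) (p : ℤ → ℝ) (F : ℤ → ℝ → ℝ)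
    (hp : ∀ t, a ≤ t → 0 < p t)
    (hF : ∀ t, a + 1 ≤ t → ∀ u : ℝ, 0 ≤ F t u)
    (y : ℤ → ℝ)
    (h : ∀ t, a ≤ t → p t * nbl y t = -(nsum ν a (fun s => F s (y (s - 1))) t)) :
    ∀ t, a + 1 ≤ t →
      ndiff ν (a - 1) (fun s => p s * nbl y s) t + F t (y (t - 1)) = 0 := by
  intro t ht
  set g : ℤ → ℝ := fun s => F s (y (s - 1)) with hg
  have hΓν : Real.Gamma ν ≠ 0 := ne_of_gt (Real.Gamma_pos_of_pos h1)
  have hΓν' : Real.Gamma (1 - ν) ≠ 0 := ne_of_gt (Real.Gamma_pos_of_pos (by linarith))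
  have claim : ∀ τ : ℤ, a ≤ τ →
      nsum (1-ν) (a-1) (fun s => p s * nbl y s) τ = -∑ r ∈ Icc (a+1) τ, g r := by
    intro τ hτ
    unfold nsum
    rw [show a - 1 + 1 = a by ring]
    have step1 : ∀ s ∈ Icc a τ,
        rfac ((τ:ℝ) - (s:ℝ) + 1) ((1-ν) - 1) * (p s * nbl y s)
          = -((1/Real.Gamma ν) * ∑ r ∈ Icc (a+1) s,
              Bf ν (τ-s).toNat * (Af ν (s-r).toNat * g r)) := by
      intro s hs
      rw [mem_Icc] at hs
      have h0 : ((τ - s).toNat : ℤ) = τ - s := Int.toNat_of_nonneg (by omega)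
      have hc := congrArg ((Int.cast : ℤ → ℝ)) h0
      push_cast at hc
      rw [show (τ:ℝ) - (s:ℝ) + 1 = ((τ-s).toNat : ℝ) + 1 by linarith, rfacB, h s hs.1]
      unfold nsum
      have inner : ∀ r ∈ Icc (a+1) s,
          rfac ((s:ℝ) - (r:ℝ) + 1) (ν - 1) * g r = Af ν (s-r).toNat * g r := by
        intro r hr
        rw [mem_Icc] at hr
        have h0' : ((s - r).toNat : ℤ) = s - r := Int.toNat_of_nonneg (by omega)
        have hc' := congrArg ((Int.cast : ℤ → ℝ)) h0'
        push_cast at hc'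
        rw [show (s:ℝ) - (r:ℝ) + 1 = ((s-r).toNat : ℝ) + 1 by linarith, rfacA]
      rw [Finset.sum_congr rfl inner, ← Finset.mul_sum]
      ring
    rw [Finset.sum_congr rfl step1]
    rw [sum_neg_distrib, ← Finset.mul_sum, sum_swap_Icc a τ
      (fun s r => Bf ν (τ-s).toNat * (Af ν (s-r).toNat * g r))]
    have inner2 : ∀ r ∈ Icc (a+1) τ,
        ∑ s ∈ Icc r τ, Bf ν (τ-s).toNat * (Af ν (s-r).toNat * g r)
          = (Real.Gamma ν * Real.Gamma (1-ν)) * g r := by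
      intro r hr
      rw [mem_Icc] at hr
      have : ∑ s ∈ Icc r τ, Bf ν (τ-s).toNat * (Af ν (s-r).toNat * g r)
          = (∑ s ∈ Icc r τ, Bf ν (τ-s).toNat * Af ν (s-r).toNat) * g r := by
        rw [sum_mul]
        exact Finset.sum_congr rfl fun s _ => by ring
      rw [this, key2 h1 h2 r τ hr.2]
    rw [Finset.sum_congr rfl inner2, ← Finset.mul_sum]
    field_simp
  have e1 := claim t (by omega)
  have e2 := claim (t-1) (by omega)
  have hnd : ndiff ν (a - 1) (fun s => p s * nbl y s) t
      = nsum (1-ν) (a-1) (fun s => p s * nbl y s) t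
        - nsum (1-ν) (a-1) (fun s => p s * nbl y s) (t-1) := rfl
  rw [hnd, e1, e2]
  have hins : Icc (a+1) t = insert t (Icc (a+1) (t-1)) := by
    ext x
    simp only [mem_Icc, mem_insert]
    omega
  have htni : t ∉ Icc (a+1) (t-1) := by
    simp only [mem_Icc]
    omega
  rw [hins, Finset.sum_insert htni]
  have hgt : g t = F t (y (t-1)) := rfl
  rw [hgt]
  ring
end

section
/- Let $0<\nu<1$, $a\in\mathbb{Z}$, $p:\mathbb{N}_a\to(0,\infty)$, $q:\mathbb{N}_{a+1}\to[0,\infty)$, $f:\mathbb{N}_{a+1}\to\mathbb{R}$, and $M\ge 0$. Assume (H1) $\sum_{s=a+1}^{\infty}\frac{1}{p(s)}\sum_{\tau=a+1}^{s}\frac{(s-\tau+1)^{\overline{\nu-1}}}{\Gamma(\nu)}q(\tau) < \infty$ and (H2) $\sum_{s=a+1}^{\infty}\frac{1}{p(s)}\sum_{\tau=a+1}^{s}\frac{(s-\tau+1)^{\overline{\nu-1}}}{\Gamma(\nu)}|f(\tau)| < \infty$. Then there exists $b\in\mathbb{N}_a$ such that the equation $\nabla_{b-1}^{\nu}(p\nabla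 y)(t)+q(t)y(t-1)=f(t)$, $t\in\mathbb{N}_{b+1}$, has a solution $y:\mathbb{N}_{b-1}\to\mathbb{R}$ with $\lim_{t\to\infty}y(t)=M$. -/
open Filter Finset

open BoundedContinuousFunction

noncomputable def cc (ν : ℝ) (j : ℕ) : ℝ := Real.Gamma (j + ν) / (Real.Gamma ν * Real.Gamma (j + 1))

lemma cc_zero (ν : ℝ) (hν : Real.Gamma ν ≠ 0) : cc ν 0 = 1 := by
  simp [cc, Real.Gamma_one, hν]

lemma cc_rec (ν : ℝ) (hν : 0 < ν) (j : ℕ) :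
    ((j : ℝ) + ν) * cc ν j = ((j : ℝ) + 1) * cc ν (j + 1) := by
  have hjν : ((j:ℝ) + ν) ≠ 0 := by positivity
  have h1 : Real.Gamma ((j:ℝ) + ν + 1) = ((j:ℝ) + ν) * Real.Gamma ((j:ℝ) + ν) :=
    Real.Gamma_add_one hjν
  have h2 : Real.Gamma ((j:ℝ) + 1 + 1) = ((j:ℝ) + 1) * Real.Gamma ((j:ℝ) + 1) :=
    Real.Gamma_add_one (by positivity)
  have h3 : Real.Gamma ((j:ℝ) + 1) ≠ 0 := (Real.Gamma_pos_of_pos (by positivity)).ne'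
  unfold cc
  push_cast
  rw [show (j:ℝ) + 1 + ν = (j:ℝ) + ν + 1 by ring, h1, h2]
  field_simp

lemma vdm (ν : ℝ) (h1 : 0 < ν) (h2 : ν < 1) (n : ℕ) :
    ∑ j ∈ Finset.range (n + 1), cc ν j * cc (1 - ν) (n - j) = 1 := by
  have hν' : 0 < 1 - ν := by linarith
  induction n with
  | zero =>
      simp [cc_zero ν (Real.Gamma_pos_of_pos h1).ne', cc_zero (1-ν) (Real.Gamma_pos_of_pos hν').ne']
  | succ m ih =>
      have key : ((m:ℝ) + 1) * ∑ j ∈ Finset.range (m + 1), cc ν j * cc (1 - ν) (m - j)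
          = ((m:ℝ) + 1) * ∑ j ∈ Finset.range (m + 2), cc ν j * cc (1 - ν) (m + 1 - j) := by
        rw [Finset.mul_sum, Finset.mul_sum]
        have split : ∀ j ∈ Finset.range (m + 1),
            ((m:ℝ) + 1) * (cc ν j * cc (1 - ν) (m - j))
              = ((j:ℝ) + 1) * cc ν (j+1) * cc (1 - ν) (m - j)
                + (((m - j : ℕ):ℝ) + 1) * (cc ν j * cc (1 - ν) ((m - j) + 1)) := by
          intro j hj
          have hjm : j ≤ m := Nat.lt_succ_iff.mp (Finset.mem_range.mp hj)
          have hcast : ((m - j : ℕ):ℝ) = (m:ℝ) - (j:ℝ) := by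
            push_cast [hjm]; ring
          have e1 : ((j:ℝ) + ν) * cc ν j = ((j:ℝ) + 1) * cc ν (j + 1) := cc_rec ν h1 j
          have e2 : (((m - j : ℕ):ℝ) + (1 - ν)) * cc (1-ν) (m - j)
              = (((m - j : ℕ):ℝ) + 1) * cc (1-ν) ((m - j) + 1) := cc_rec (1-ν) hν' (m - j)
          have : ((m:ℝ) + 1) = ((j:ℝ) + ν) + (((m - j:ℕ):ℝ) + (1 - ν)) := by
            rw [hcast]; ring
          rw [this, add_mul]
          rw [show ((j:ℝ) + ν) * (cc ν j * cc (1-ν) (m-j)) = (((j:ℝ) + ν) * cc ν j) * cc (1-ν) (m-j) by ring,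
              e1]
          rw [show (((m - j:ℕ):ℝ) + (1 - ν)) * (cc ν j * cc (1-ν) (m-j))
                = cc ν j * ((((m - j:ℕ):ℝ) + (1 - ν)) * cc (1-ν) (m-j)) by ring, e2]
          ring
        rw [Finset.sum_congr rfl split]
        rw [Finset.sum_add_distrib]
        -- first sum: reindex
        have A : ∑ j ∈ Finset.range (m + 1), ((j:ℝ) + 1) * cc ν (j+1) * cc (1 - ν) (m - j)
            = ∑ k ∈ Finset.range (m + 2), (k:ℝ) * (cc ν k * cc (1 - ν) (m + 1 - k)) := by
          rw [Finset.sum_range_succ' (fun k => (k:ℝ) * (cc ν k * cc (1 - ν) (m + 1 - k))) (m+1)]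
          simp only [Nat.cast_zero, zero_mul, add_zero]
          apply Finset.sum_congr rfl
          intro j hj
          have : m + 1 - (j + 1) = m - j := by omega
          rw [this]
          push_cast
          ring
        have B : ∑ j ∈ Finset.range (m + 1), (((m - j : ℕ):ℝ) + 1) * (cc ν j * cc (1 - ν) ((m - j) + 1))
            = ∑ j ∈ Finset.range (m + 2), ((m + 1 - j : ℕ):ℝ) * (cc ν j * cc (1 - ν) (m + 1 - j)) := by
          rw [Finset.sum_range_succ (fun j => ((m + 1 - j : ℕ):ℝ) * (cc ν j * cc (1 - ν) (m + 1 - j))) (m+1)]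
          simp only [Nat.sub_self, Nat.cast_zero, zero_mul, add_zero]
          apply Finset.sum_congr rfl
          intro j hj
          have hjm : j ≤ m := Nat.lt_succ_iff.mp (Finset.mem_range.mp hj)
          have e : m + 1 - j = (m - j) + 1 := by omega
          rw [e]
          push_cast
          ring
        rw [A, B, ← Finset.sum_add_distrib]
        apply Finset.sum_congr rfl
        intro k hk
        have hkm : k ≤ m + 1 := Nat.lt_succ_iff.mp (Finset.mem_range.mp hk)
        have : ((m + 1 - k : ℕ):ℝ) = (m:ℝ) + 1 - (k:ℝ) := by push_cast [hkm]; ring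
        rw [this]
        ring
      have hm1 : ((m:ℝ) + 1) ≠ 0 := by positivity
      have := mul_left_cancel₀ hm1 (key.trans rfl)
      rw [← this, ih]

lemma rfac_c (ν : ℝ) (i : ℕ) : rfac ((i:ℝ) + 1) (ν - 1) / Real.Gamma ν = cc ν i := by
  unfold rfac cc
  rw [show (i:ℝ) + 1 + (ν - 1) = (i:ℝ) + ν by ring]
  rw [div_div]
  ring_nf

lemma rfac_d (ν : ℝ) (i : ℕ) : rfac ((i:ℝ) + 1) (-ν) / Real.Gamma (1 - ν) = cc (1 - ν) i := by
  unfold rfac cc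
  rw [show (i:ℝ) + 1 + -ν = (i:ℝ) + (1 - ν) by ring]
  rw [div_div]
  ring_nf

lemma int_Icc_sum (τ t : ℤ) (h : τ ≤ t) (g : ℤ → ℝ) :
    ∑ s ∈ Finset.Icc τ t, g s = ∑ j ∈ Finset.range ((t - τ).toNat + 1), g (τ + j) := by
  apply Finset.sum_nbij' (fun s => (s - τ).toNat) (fun j => τ + (j : ℤ))
  · intro s hs
    simp only [Finset.mem_Icc] at hs
    simp only [Finset.mem_range]
    omega
  · intro j hj
    simp only [Finset.mem_range] at hj
    simp only [Finset.mem_Icc]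
    omega
  · intro s hs
    simp only [Finset.mem_Icc] at hs
    omega
  · intro j hj
    simp only [Finset.mem_range] at hj
    omega
  · intro s hs
    simp only [Finset.mem_Icc] at hs
    congr 1
    omega

noncomputable def Gw (ν : ℝ) (b : ℤ) (w : ℤ → ℝ) (s : ℤ) : ℝ :=
  ∑ τ ∈ Finset.Icc (b + 1) s, rfac ((s:ℝ) - (τ:ℝ) + 1) (ν - 1) / Real.Gamma ν * w τ
noncomputable def Uw (ν : ℝ) (b : ℤ) (p w : ℤ → ℝ) (s : ℤ) : ℝ := (1 / p s) * Gw ν b w s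
noncomputable def Rw (ν : ℝ) (b : ℤ) (p w : ℤ → ℝ) (t : ℤ) : ℝ := ∑' k : ℕ, Uw ν b p w (t + 1 + k)

lemma rfac_pos {x r : ℝ} (hx : 0 < x) (hxr : 0 < x + r) : 0 < rfac x r :=
  div_pos (Real.Gamma_pos_of_pos hxr) (Real.Gamma_pos_of_pos hx)

lemma swap_lemma (ν : ℝ) (h1 : 0 < ν) (h2 : ν < 1) (b t : ℤ) (hbt : b ≤ t) (w : ℤ → ℝ) :
    nsum (1 - ν) (b - 1)
      (fun s => ∑ τ ∈ Finset.Icc (b+1) s, rfac ((s:ℝ) - (τ:ℝ) + 1) (ν - 1) / Real.Gamma ν * w τ) t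
    = ∑ τ ∈ Finset.Icc (b+1) t, w τ := by
  have hG1 : Real.Gamma (1 - ν) ≠ 0 := (Real.Gamma_pos_of_pos (by linarith)).ne'
  unfold nsum
  rw [show b - 1 + 1 = b by ring]
  rw [Finset.mul_sum]
  have step1 : ∀ s ∈ Finset.Icc b t,
      1 / Real.Gamma (1-ν) * (rfac ((t:ℝ) - (s:ℝ) + 1) (1 - ν - 1) *
        ∑ τ ∈ Finset.Icc (b+1) s, rfac ((s:ℝ) - (τ:ℝ) + 1) (ν - 1) / Real.Gamma ν * w τ)
      = ∑ τ ∈ Finset.Icc (b+1) s,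
          (rfac ((t:ℝ) - (s:ℝ) + 1) (-ν) / Real.Gamma (1-ν)) *
            (rfac ((s:ℝ) - (τ:ℝ) + 1) (ν - 1) / Real.Gamma ν) * w τ := by
    intro s _
    rw [show (1 : ℝ) - ν - 1 = -ν by ring, Finset.mul_sum, Finset.mul_sum]
    apply Finset.sum_congr rfl
    intro τ _
    ring
  rw [Finset.sum_congr rfl step1]
  rw [Finset.sum_comm' (s := Finset.Icc b t) (t := fun s => Finset.Icc (b+1) s)
      (t' := Finset.Icc (b+1) t) (s' := fun τ => Finset.Icc τ t)
      (by intro s τ; simp only [Finset.mem_Icc]; omega)]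
  apply Finset.sum_congr rfl
  intro τ hτ
  simp only [Finset.mem_Icc] at hτ
  have hτt : τ ≤ t := hτ.2
  rw [int_Icc_sum τ t hτt]
  set n := (t - τ).toNat with hn
  have hz : (n : ℤ) = t - τ := by omega
  have hnt : (t : ℝ) - (τ : ℝ) = (n : ℝ) := by
    have := congrArg (fun z : ℤ => (z : ℝ)) hz
    push_cast at this
    linarith
  have key : ∀ j ∈ Finset.range (n + 1),
      (rfac ((t:ℝ) - ((τ + (j:ℤ) : ℤ):ℝ) + 1) (-ν) / Real.Gamma (1-ν)) *
        (rfac ((((τ + (j:ℤ)) : ℤ):ℝ) - (τ:ℝ) + 1) (ν - 1) / Real.Gamma ν) * w τ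
      = cc ν j * cc (1-ν) (n - j) * w τ := by
    intro j hj
    have hjn : j ≤ n := Nat.lt_succ_iff.mp (Finset.mem_range.mp hj)
    have e1 : (t:ℝ) - ((τ + (j:ℤ) : ℤ):ℝ) + 1 = ((n - j : ℕ):ℝ) + 1 := by
      push_cast [hjn]
      rw [show ((t:ℝ) - ((τ:ℝ) + (j:ℝ)) + 1) = ((t:ℝ) - (τ:ℝ)) - (j:ℝ) + 1 by ring, hnt]
    have e2 : (((τ + (j:ℤ)) : ℤ):ℝ) - (τ:ℝ) + 1 = (j:ℝ) + 1 := by push_cast; ring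
    rw [e1, e2, rfac_d, rfac_c]
    ring
  rw [Finset.sum_congr rfl key]
  rw [← Finset.sum_mul]
  rw [show ∑ j ∈ Finset.range (n+1), cc ν j * cc (1-ν) (n - j) = 1 from vdm ν h1 h2 n]
  rw [one_mul]

theorem stmt16 (ν : ℝ) (h1 : 0 < ν) (h2 : ν < 1) (a : ℤ) (p q f : ℤ → ℝ) (M : ℝ)
    (hM : 0 ≤ M) (hp : ∀ t, a ≤ t → 0 < p t) (hq : ∀ t, a + 1 ≤ t → 0 ≤ q t)
    (hH1 : Summable (fun k : ℕ =>
      (1 / p (a + 1 + k)) * ∑ τ ∈ Finset.Icc (a + 1) (a + 1 + (k : ℤ)),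
        rfac ((a : ℝ) + 1 + (k : ℝ) - (τ : ℝ) + 1) (ν - 1) / Real.Gamma ν * q τ))
    (hH2 : Summable (fun k : ℕ =>
      (1 / p (a + 1 + k)) * ∑ τ ∈ Finset.Icc (a + 1) (a + 1 + (k : ℤ)),
        rfac ((a : ℝ) + 1 + (k : ℝ) - (τ : ℝ) + 1) (ν - 1) / Real.Gamma ν * |f τ|)) :
    ∃ b : ℤ, a ≤ b ∧ ∃ y : ℤ → ℝ,
      (∀ t, b + 1 ≤ t →
        ndiff ν (b - 1) (fun s => p s * nbl y s) t + q t * y (t - 1) = f t) ∧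
      Filter.Tendsto y Filter.atTop (nhds M) := by
  have hν1 : 0 < 1 - ν := by linarith
  have hΓν : 0 < Real.Gamma ν := Real.Gamma_pos_of_pos h1
  set Cq : ℕ → ℝ := fun k =>
      (1 / p (a + 1 + k)) * ∑ τ ∈ Finset.Icc (a + 1) (a + 1 + (k : ℤ)),
        rfac ((a : ℝ) + 1 + (k : ℝ) - (τ : ℝ) + 1) (ν - 1) / Real.Gamma ν * q τ with hCqdef
  set Cf : ℕ → ℝ := fun k =>
      (1 / p (a + 1 + k)) * ∑ τ ∈ Finset.Icc (a + 1) (a + 1 + (k : ℤ)),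
        rfac ((a : ℝ) + 1 + (k : ℝ) - (τ : ℝ) + 1) (ν - 1) / Real.Gamma ν * |f τ| with hCfdef
  have hSq : Summable Cq := hH1
  have hSf : Summable Cf := hH2
  -- kernel positivity
  have hker : ∀ s τ : ℤ, τ ≤ s → 0 < rfac ((s:ℝ) - (τ:ℝ) + 1) (ν - 1) / Real.Gamma ν := by
    intro s τ hτs
    have hx : (0:ℝ) < (s:ℝ) - (τ:ℝ) + 1 := by
      have : (τ:ℝ) ≤ (s:ℝ) := by exact_mod_cast hτs
      linarith
    have hxr : (0:ℝ) < (s:ℝ) - (τ:ℝ) + 1 + (ν - 1) := by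
      have : (τ:ℝ) ≤ (s:ℝ) := by exact_mod_cast hτs
      linarith
    exact div_pos (rfac_pos hx hxr) hΓν
  have hCq0 : ∀ k, 0 ≤ Cq k := by
    intro k
    apply mul_nonneg
    · exact (div_pos one_pos (hp _ (by omega))).le
    · apply Finset.sum_nonneg
      intro τ hτ
      simp only [Finset.mem_Icc] at hτ
      have h := (hker (a + 1 + (k:ℤ)) τ hτ.2).le
      rw [show ((a + 1 + (k:ℤ) : ℤ):ℝ) = (a:ℝ) + 1 + (k:ℝ) by push_cast; ring] at h
      exact mul_nonneg h (hq τ hτ.1)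
  have hCf0 : ∀ k, 0 ≤ Cf k := by
    intro k
    apply mul_nonneg
    · exact (div_pos one_pos (hp _ (by omega))).le
    · apply Finset.sum_nonneg
      intro τ hτ
      simp only [Finset.mem_Icc] at hτ
      have h := (hker (a + 1 + (k:ℤ)) τ hτ.2).le
      rw [show ((a + 1 + (k:ℤ) : ℤ):ℝ) = (a:ℝ) + 1 + (k:ℝ) by push_cast; ring] at h
      exact mul_nonneg h (abs_nonneg _)
  -- choose N with small q-tail
  obtain ⟨N, hN⟩ : ∃ N : ℕ, ∑' k : ℕ, Cq (k + N) < 1/2 := by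
    have h0 := tendsto_sum_nat_add Cq
    have := (h0.eventually (eventually_lt_nhds (show (0:ℝ) < 1/2 by norm_num))).exists
    obtain ⟨N, hN⟩ := this
    exact ⟨N, hN⟩
  set εq : ℝ := ∑' k : ℕ, Cq (k + N) with hεq
  set εf : ℝ := ∑' k : ℕ, Cf (k + N) with hεf
  have hεq0 : 0 ≤ εq := tsum_nonneg (fun k => hCq0 _)
  have hεf0 : 0 ≤ εf := tsum_nonneg (fun k => hCf0 _)
  set b : ℤ := a + (N : ℤ) + 1 with hb
  refine ⟨b, by omega, ?_⟩
  -- rewriting Cf/Cq at integer points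
  have hCs : ∀ s : ℤ, a + 1 ≤ s →
      (Cf ((s - a - 1).toNat) = (1 / p s) * ∑ τ ∈ Finset.Icc (a+1) s,
          rfac ((s:ℝ) - (τ:ℝ) + 1) (ν - 1) / Real.Gamma ν * |f τ|)
    ∧ (Cq ((s - a - 1).toNat) = (1 / p s) * ∑ τ ∈ Finset.Icc (a+1) s,
          rfac ((s:ℝ) - (τ:ℝ) + 1) (ν - 1) / Real.Gamma ν * q τ) := by
    intro s hs
    set m : ℕ := (s - a - 1).toNat with hm
    have hmz : a + 1 + (m : ℤ) = s := by omega
    have hmr : ((m : ℕ) : ℝ) = (s:ℝ) - (a:ℝ) - 1 := by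
      have := congrArg (fun z : ℤ => (z : ℝ)) hmz
      push_cast at this
      linarith
    constructor
    · rw [hCfdef]
      simp only
      rw [hmz]
      congr 1
      apply Finset.sum_congr rfl
      intro τ _
      rw [show (a:ℝ) + 1 + (m:ℝ) - (τ:ℝ) + 1 = (s:ℝ) - (τ:ℝ) + 1 by rw [hmr]; ring]
    · rw [hCqdef]
      simp only
      rw [hmz]
      congr 1
      apply Finset.sum_congr rfl
      intro τ _
      rw [show (a:ℝ) + 1 + (m:ℝ) - (τ:ℝ) + 1 = (s:ℝ) - (τ:ℝ) + 1 by rw [hmr]; ring]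
  -- pointwise bound
  have hPoint : ∀ (w : ℤ → ℝ) (A B : ℝ), 0 ≤ A → 0 ≤ B →
      (∀ τ, b + 1 ≤ τ → |w τ| ≤ A * |f τ| + B * q τ) →
      ∀ s : ℤ, b ≤ s →
        |Uw ν b p w s| ≤ A * Cf ((s - a - 1).toNat) + B * Cq ((s - a - 1).toNat) := by
    intro w A B hA hB hw s hs
    have hsa : a + 1 ≤ s := by omega
    obtain ⟨hCfs, hCqs⟩ := hCs s hsa
    rw [hCfs, hCqs]
    have hps : 0 < p s := hp s (by omega)
    have hps' : (0:ℝ) < 1 / p s := div_pos one_pos hps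
    unfold Uw Gw
    calc |(1 / p s) * ∑ τ ∈ Finset.Icc (b+1) s,
            rfac ((s:ℝ) - (τ:ℝ) + 1) (ν - 1) / Real.Gamma ν * w τ|
        = (1 / p s) * |∑ τ ∈ Finset.Icc (b+1) s,
            rfac ((s:ℝ) - (τ:ℝ) + 1) (ν - 1) / Real.Gamma ν * w τ| := by
          rw [abs_mul, abs_of_pos hps']
      _ ≤ (1 / p s) * ∑ τ ∈ Finset.Icc (b+1) s,
            rfac ((s:ℝ) - (τ:ℝ) + 1) (ν - 1) / Real.Gamma ν * (A * |f τ| + B * q τ) := by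
          apply mul_le_mul_of_nonneg_left _ hps'.le
          refine (Finset.abs_sum_le_sum_abs _ _).trans (Finset.sum_le_sum ?_)
          intro τ hτ
          simp only [Finset.mem_Icc] at hτ
          rw [abs_mul, abs_of_pos (hker s τ hτ.2)]
          exact mul_le_mul_of_nonneg_left (hw τ hτ.1) (hker s τ hτ.2).le
      _ ≤ (1 / p s) * ∑ τ ∈ Finset.Icc (a+1) s,
            rfac ((s:ℝ) - (τ:ℝ) + 1) (ν - 1) / Real.Gamma ν * (A * |f τ| + B * q τ) := by
          apply mul_le_mul_of_nonneg_left _ hps'.le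
          apply Finset.sum_le_sum_of_subset_of_nonneg
          · exact Finset.Icc_subset_Icc_left (by omega)
          · intro τ hτ _
            simp only [Finset.mem_Icc] at hτ
            exact mul_nonneg (hker s τ hτ.2).le
              (add_nonneg (mul_nonneg hA (abs_nonneg _)) (mul_nonneg hB (hq τ hτ.1)))
      _ = A * ((1 / p s) * ∑ τ ∈ Finset.Icc (a+1) s,
            rfac ((s:ℝ) - (τ:ℝ) + 1) (ν - 1) / Real.Gamma ν * |f τ|)
          + B * ((1 / p s) * ∑ τ ∈ Finset.Icc (a+1) s,
            rfac ((s:ℝ) - (τ:ℝ) + 1) (ν - 1) / Real.Gamma ν * q τ) := by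
          have : ∑ τ ∈ Finset.Icc (a+1) s,
              rfac ((s:ℝ) - (τ:ℝ) + 1) (ν - 1) / Real.Gamma ν * (A * |f τ| + B * q τ)
            = A * ∑ τ ∈ Finset.Icc (a+1) s,
                rfac ((s:ℝ) - (τ:ℝ) + 1) (ν - 1) / Real.Gamma ν * |f τ|
              + B * ∑ τ ∈ Finset.Icc (a+1) s,
                rfac ((s:ℝ) - (τ:ℝ) + 1) (ν - 1) / Real.Gamma ν * q τ := by
            rw [Finset.mul_sum, Finset.mul_sum, ← Finset.sum_add_distrib]
            apply Finset.sum_congr rfl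
            intro τ _
            ring
          rw [this]
          ring
  -- master lemma
  have hMaster : ∀ (w : ℤ → ℝ) (A B : ℝ), 0 ≤ A → 0 ≤ B →
      (∀ τ, b + 1 ≤ τ → |w τ| ≤ A * |f τ| + B * q τ) →
      ∀ t : ℤ, b - 1 ≤ t →
        Summable (fun k : ℕ => Uw ν b p w (t + 1 + k)) ∧
        |Rw ν b p w t| ≤ ∑' k : ℕ,
          (A * Cf (k + (t - a).toNat) + B * Cq (k + (t - a).toNat)) := by
    intro w A B hA hB hw t ht
    set j : ℕ := (t - a).toNat with hj
    have hDsum : Summable (fun k : ℕ => A * Cf (k + j) + B * Cq (k + j)) :=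
      (((summable_nat_add_iff j).mpr hSf).mul_left A).add
        (((summable_nat_add_iff j).mpr hSq).mul_left B)
    have hptk : ∀ k : ℕ, |Uw ν b p w (t + 1 + k)| ≤ A * Cf (k + j) + B * Cq (k + j) := by
      intro k
      have hbs : b ≤ t + 1 + k := by omega
      have h := hPoint w A B hA hB hw (t + 1 + k) hbs
      have hidx : ((t + 1 + (k:ℤ)) - a - 1).toNat = k + j := by omega
      rwa [hidx] at h
    have habs : Summable (fun k : ℕ => |Uw ν b p w (t + 1 + k)|) :=
      Summable.of_nonneg_of_le (fun k => abs_nonneg _) hptk hDsum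
    have hsum : Summable (fun k : ℕ => Uw ν b p w (t + 1 + k)) := habs.of_abs
    refine ⟨hsum, ?_⟩
    unfold Rw
    calc |∑' k : ℕ, Uw ν b p w (t + 1 + k)|
        ≤ ∑' k : ℕ, |Uw ν b p w (t + 1 + k)| := by
          have habs' : Summable (fun k : ℕ => ‖Uw ν b p w (t + 1 + k)‖) := by
            simpa only [Real.norm_eq_abs] using habs
          have h' := norm_tsum_le_tsum_norm habs'
          simpa only [Real.norm_eq_abs] using h'
      _ ≤ ∑' k : ℕ, (A * Cf (k + j) + B * Cq (k + j)) := Summable.tsum_le_tsum hptk habs hDsum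
  -- tail estimate
  have hTail : ∀ (A B : ℝ), 0 ≤ A → 0 ≤ B → ∀ j : ℕ, N ≤ j →
      ∑' k : ℕ, (A * Cf (k + j) + B * Cq (k + j)) ≤ A * εf + B * εq := by
    intro A B hA hB j hj
    have hsf : Summable (fun k : ℕ => Cf (k + j)) := (summable_nat_add_iff j).mpr hSf
    have hsq : Summable (fun k : ℕ => Cq (k + j)) := (summable_nat_add_iff j).mpr hSq
    have hsfN : Summable (fun k : ℕ => Cf (k + N)) := (summable_nat_add_iff N).mpr hSf
    have hsqN : Summable (fun k : ℕ => Cq (k + N)) := (summable_nat_add_iff N).mpr hSq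
    have h1 : ∑' k : ℕ, Cf (k + j) ≤ εf := by
      rw [hεf]
      apply Summable.tsum_le_tsum_of_inj (fun k => k + (j - N)) (add_left_injective _)
        (fun c _ => hCf0 _) (fun k => by rw [show k + (j - N) + N = k + j by omega]) hsf hsfN
    have h2 : ∑' k : ℕ, Cq (k + j) ≤ εq := by
      rw [hεq]
      apply Summable.tsum_le_tsum_of_inj (fun k => k + (j - N)) (add_left_injective _)
        (fun c _ => hCq0 _) (fun k => by rw [show k + (j - N) + N = k + j by omega]) hsq hsqN
    rw [Summable.tsum_add (hsf.mul_left A) (hsq.mul_left B), tsum_mul_left, tsum_mul_left]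
    exact add_le_add (mul_le_mul_of_nonneg_left h1 hA) (mul_le_mul_of_nonneg_left h2 hB)
  have hRbound : ∀ (w : ℤ → ℝ) (A B : ℝ), 0 ≤ A → 0 ≤ B →
      (∀ τ, b + 1 ≤ τ → |w τ| ≤ A * |f τ| + B * q τ) →
      ∀ t : ℤ, b - 1 ≤ t → |Rw ν b p w t| ≤ A * εf + B * εq := by
    intro w A B hA hB hw t ht
    exact ((hMaster w A B hA hB hw t ht).2).trans (hTail A B hA hB _ (by omega))
  -- bound for the specific right-hand sides
  have hwball : ∀ (y : ℤ →ᵇ ℝ) (τ : ℤ), b + 1 ≤ τ →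
      |f τ - q τ * y (τ - 1)| ≤ 1 * |f τ| + ‖y‖ * q τ := by
    intro y τ hτ
    have hqτ : 0 ≤ q τ := hq τ (by omega)
    calc |f τ - q τ * y (τ - 1)| ≤ |f τ| + |q τ * y (τ - 1)| := abs_sub _ _
      _ = |f τ| + q τ * |y (τ - 1)| := by rw [abs_mul, abs_of_nonneg hqτ]
      _ ≤ 1 * |f τ| + ‖y‖ * q τ := by
          rw [one_mul]
          have : |y (τ - 1)| ≤ ‖y‖ := by
            simpa [Real.norm_eq_abs] using y.norm_coe_le_norm (τ - 1)
          nlinarith [abs_nonneg (y (τ - 1))]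
  -- the operator
  have hT : ∀ y : ℤ →ᵇ ℝ, ∃ Y : ℤ →ᵇ ℝ, ∀ t : ℤ,
      Y t = M - Rw ν b p (fun τ => f τ - q τ * y (τ - 1)) (max (b - 1) t) := by
    intro y
    have hRb : ∀ t : ℤ, |Rw ν b p (fun τ => f τ - q τ * y (τ - 1)) (max (b - 1) t)|
        ≤ 1 * εf + ‖y‖ * εq :=
      fun t => hRbound _ 1 ‖y‖ zero_le_one (norm_nonneg _) (hwball y) _ (le_max_left _ _)
    refine ⟨⟨⟨fun t => M - Rw ν b p (fun τ => f τ - q τ * y (τ - 1)) (max (b - 1) t),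
        continuous_of_discreteTopology⟩, ⟨2 * (1 * εf + ‖y‖ * εq), ?_⟩⟩, fun t => rfl⟩
    intro t t'
    simp only [ContinuousMap.coe_mk]
    rw [Real.dist_eq]
    have h1 := hRb t
    have h2 := hRb t'
    have h3 : |(M - Rw ν b p (fun τ => f τ - q τ * y (τ - 1)) (max (b - 1) t))
        - (M - Rw ν b p (fun τ => f τ - q τ * y (τ - 1)) (max (b - 1) t'))|
        ≤ |Rw ν b p (fun τ => f τ - q τ * y (τ - 1)) (max (b - 1) t')|
          + |Rw ν b p (fun τ => f τ - q τ * y (τ - 1)) (max (b - 1) t)| := by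
      rw [show (M - Rw ν b p (fun τ => f τ - q τ * y (τ - 1)) (max (b - 1) t))
          - (M - Rw ν b p (fun τ => f τ - q τ * y (τ - 1)) (max (b - 1) t'))
          = Rw ν b p (fun τ => f τ - q τ * y (τ - 1)) (max (b - 1) t')
            - Rw ν b p (fun τ => f τ - q τ * y (τ - 1)) (max (b - 1) t) by ring]
      exact abs_sub _ _
    linarith [h3]
  choose T hTdef using hT
  -- linearity of Uw in w
  have hUlin : ∀ (w1 w2 : ℤ → ℝ) (s : ℤ),
      Uw ν b p w1 s - Uw ν b p w2 s = Uw ν b p (fun τ => w1 τ - w2 τ) s := by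
    intro w1 w2 s
    unfold Uw Gw
    rw [← mul_sub, ← Finset.sum_sub_distrib]
    congr 1
    apply Finset.sum_congr rfl
    intro τ _
    ring
  -- Lipschitz estimate
  have hLip : ∀ y y' : ℤ →ᵇ ℝ, dist (T y) (T y') ≤ (1/2) * dist y y' := by
    intro y y'
    have hd0 : (0:ℝ) ≤ dist y y' := dist_nonneg
    rw [BoundedContinuousFunction.dist_le (by positivity)]
    intro t
    rw [hTdef y t, hTdef y' t, Real.dist_eq]
    have hm : b - 1 ≤ max (b - 1) t := le_max_left _ _
    have hδ : ∀ τ : ℤ, b + 1 ≤ τ →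
        |(f τ - q τ * y (τ - 1)) - (f τ - q τ * y' (τ - 1))| ≤ 0 * |f τ| + dist y y' * q τ := by
      intro τ hτ
      have hqτ : 0 ≤ q τ := hq τ (by omega)
      rw [show (f τ - q τ * y (τ - 1)) - (f τ - q τ * y' (τ - 1))
          = q τ * (y' (τ - 1) - y (τ - 1)) by ring]
      rw [abs_mul, abs_of_nonneg hqτ, zero_mul, zero_add]
      have hdc : |y' (τ - 1) - y (τ - 1)| ≤ dist y y' := by
        have := BoundedContinuousFunction.dist_coe_le_dist (f := y') (g := y) (τ - 1)
        rw [Real.dist_eq] at this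
        calc |y' (τ - 1) - y (τ - 1)| ≤ dist y' y := this
          _ = dist y y' := dist_comm _ _
      nlinarith
    have hs1 := (hMaster (fun τ => f τ - q τ * y (τ - 1)) 1 ‖y‖ zero_le_one (norm_nonneg _)
        (hwball y) (max (b - 1) t) hm).1
    have hs2 := (hMaster (fun τ => f τ - q τ * y' (τ - 1)) 1 ‖y'‖ zero_le_one (norm_nonneg _)
        (hwball y') (max (b - 1) t) hm).1
    have hdiff : Rw ν b p (fun τ => f τ - q τ * y (τ - 1)) (max (b - 1) t)
        - Rw ν b p (fun τ => f τ - q τ * y' (τ - 1)) (max (b - 1) t)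
        = Rw ν b p (fun τ => (f τ - q τ * y (τ - 1)) - (f τ - q τ * y' (τ - 1))) (max (b - 1) t) := by
      unfold Rw
      rw [← Summable.tsum_sub hs1 hs2]
      exact tsum_congr fun k => hUlin _ _ _
    have hRδ := hRbound (fun τ => (f τ - q τ * y (τ - 1)) - (f τ - q τ * y' (τ - 1)))
        0 (dist y y') le_rfl hd0 hδ (max (b - 1) t) hm
    calc |(M - Rw ν b p (fun τ => f τ - q τ * y (τ - 1)) (max (b - 1) t))
          - (M - Rw ν b p (fun τ => f τ - q τ * y' (τ - 1)) (max (b - 1) t))|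
        = |Rw ν b p (fun τ => f τ - q τ * y (τ - 1)) (max (b - 1) t)
            - Rw ν b p (fun τ => f τ - q τ * y' (τ - 1)) (max (b - 1) t)| := by
          rw [show (M - Rw ν b p (fun τ => f τ - q τ * y (τ - 1)) (max (b - 1) t))
              - (M - Rw ν b p (fun τ => f τ - q τ * y' (τ - 1)) (max (b - 1) t))
              = -(Rw ν b p (fun τ => f τ - q τ * y (τ - 1)) (max (b - 1) t)
                - Rw ν b p (fun τ => f τ - q τ * y' (τ - 1)) (max (b - 1) t)) by ring]
          rw [abs_neg]
      _ = |Rw ν b p (fun τ => (f τ - q τ * y (τ - 1)) - (f τ - q τ * y' (τ - 1))) (max (b - 1) t)| := by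
          rw [hdiff]
      _ ≤ 0 * εf + dist y y' * εq := hRδ
      _ ≤ (1/2) * dist y y' := by nlinarith
  have hcontr : ContractingWith (1/2 : NNReal) T := by
    constructor
    · rw [← NNReal.coe_lt_coe]
      norm_num
    · apply LipschitzWith.of_dist_le_mul
      intro y y'
      have := hLip y y'
      calc dist (T y) (T y') ≤ (1/2) * dist y y' := this
        _ = ((1/2 : NNReal) : ℝ) * dist y y' := by norm_num
  let y0 : ℤ →ᵇ ℝ := ContractingWith.fixedPoint T hcontr
  have hfix : T y0 = y0 := hcontr.fixedPoint_isFixedPt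
  have hYeq : ∀ t : ℤ, b - 1 ≤ t →
      (y0 : ℤ → ℝ) t = M - Rw ν b p (fun τ => f τ - q τ * y0 (τ - 1)) t := by
    intro t ht
    conv_lhs => rw [← hfix]
    rw [hTdef y0 t, max_eq_right ht]
  have hw0b := hwball y0
  -- the finite-difference identity
  have hg : ∀ s : ℤ, b ≤ s →
      p s * nbl (⇑y0) s = Gw ν b (fun τ => f τ - q τ * y0 (τ - 1)) s := by
    intro s hs
    have h1 := hYeq s (by omega)
    have h2 := hYeq (s - 1) (by omega)
    have hsum1 : Summable (fun k : ℕ =>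
        Uw ν b p (fun τ => f τ - q τ * y0 (τ - 1)) ((s - 1) + 1 + k)) :=
      (hMaster _ 1 ‖y0‖ zero_le_one (norm_nonneg _) hw0b (s - 1) (by omega)).1
    have hv : Summable (fun k : ℕ => Uw ν b p (fun τ => f τ - q τ * y0 (τ - 1)) (s + k)) := by
      apply hsum1.congr
      intro k
      congr 1
      ring
    have hE : Rw ν b p (fun τ => f τ - q τ * y0 (τ - 1)) (s - 1)
        = Uw ν b p (fun τ => f τ - q τ * y0 (τ - 1)) s
          + Rw ν b p (fun τ => f τ - q τ * y0 (τ - 1)) s := by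
      unfold Rw
      calc ∑' k : ℕ, Uw ν b p (fun τ => f τ - q τ * y0 (τ - 1)) (s - 1 + 1 + k)
          = ∑' k : ℕ, Uw ν b p (fun τ => f τ - q τ * y0 (τ - 1)) (s + k) :=
            tsum_congr fun k => by rw [show s - 1 + 1 + (k:ℤ) = s + (k:ℤ) by ring]
        _ = Uw ν b p (fun τ => f τ - q τ * y0 (τ - 1)) (s + ((0:ℕ):ℤ))
            + ∑' k : ℕ, Uw ν b p (fun τ => f τ - q τ * y0 (τ - 1)) (s + ((k + 1 : ℕ):ℤ)) :=
            Summable.tsum_eq_zero_add hv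
        _ = Uw ν b p (fun τ => f τ - q τ * y0 (τ - 1)) s
            + ∑' k : ℕ, Uw ν b p (fun τ => f τ - q τ * y0 (τ - 1)) (s + 1 + k) := by
            congr 1
            · norm_num
            · exact tsum_congr fun k => by rw [show s + ((k + 1 : ℕ):ℤ) = s + 1 + (k:ℤ) by push_cast; ring]
    have hps : p s ≠ 0 := (hp s (by omega)).ne'
    unfold nbl
    rw [h1, h2, hE]
    rw [show M - (Uw ν b p (fun τ => f τ - q τ * y0 (τ - 1)) s
        + Rw ν b p (fun τ => f τ - q τ * y0 (τ - 1)) s)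
        = M - Rw ν b p (fun τ => f τ - q τ * y0 (τ - 1)) s
          - Uw ν b p (fun τ => f τ - q τ * y0 (τ - 1)) s by ring]
    rw [show M - Rw ν b p (fun τ => f τ - q τ * y0 (τ - 1)) s
        - (M - Rw ν b p (fun τ => f τ - q τ * y0 (τ - 1)) s
          - Uw ν b p (fun τ => f τ - q τ * y0 (τ - 1)) s)
        = Uw ν b p (fun τ => f τ - q τ * y0 (τ - 1)) s by ring]
    unfold Uw
    rw [← mul_assoc, mul_one_div, div_self hps, one_mul]
  refine ⟨⇑y0, ?_, ?_⟩
  · -- the equation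
    intro t ht
    have hnsum : ∀ u : ℤ, b ≤ u →
        nsum (1 - ν) (b - 1) (fun s => p s * nbl (⇑y0) s) u
          = ∑ τ ∈ Finset.Icc (b + 1) u, (f τ - q τ * y0 (τ - 1)) := by
      intro u hu
      have hrw : nsum (1 - ν) (b - 1) (fun s => p s * nbl (⇑y0) s) u
          = nsum (1 - ν) (b - 1) (fun s => Gw ν b (fun τ => f τ - q τ * y0 (τ - 1)) s) u := by
        unfold nsum
        congr 1
        apply Finset.sum_congr rfl
        intro s hs
        simp only [Finset.mem_Icc] at hs
        dsimp only
        rw [hg s (by omega)]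
      rw [hrw]
      exact swap_lemma ν h1 h2 b u hu _
    rw [show ndiff ν (b - 1) (fun s => p s * nbl (⇑y0) s) t
        = nsum (1 - ν) (b - 1) (fun s => p s * nbl (⇑y0) s) t
          - nsum (1 - ν) (b - 1) (fun s => p s * nbl (⇑y0) s) (t - 1) from rfl]
    rw [hnsum t (by omega), hnsum (t - 1) (by omega)]
    have hins : Finset.Icc (b + 1) t = insert t (Finset.Icc (b + 1) (t - 1)) := by
      ext x
      simp only [Finset.mem_Icc, Finset.mem_insert]
      omega
    rw [hins, Finset.sum_insert (by simp only [Finset.mem_Icc]; omega)]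
    ring
  · -- the limit
    have hE0 : Tendsto (fun j : ℕ =>
        (∑' k : ℕ, Cf (k + j)) + ‖y0‖ * ∑' k : ℕ, Cq (k + j)) atTop (nhds 0) := by
      have h := (tendsto_sum_nat_add Cf).add ((tendsto_sum_nat_add Cq).const_mul ‖y0‖)
      simp only [mul_zero, add_zero] at h
      exact h
    have hcomp : Tendsto (fun t : ℤ => (t - a).toNat) atTop atTop := by
      apply Filter.tendsto_atTop_atTop.mpr
      intro n
      exact ⟨a + n, fun t ht => by omega⟩
    have hRlim : Tendsto (fun t : ℤ =>
        Rw ν b p (fun τ => f τ - q τ * y0 (τ - 1)) t) atTop (nhds 0) := by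
      apply squeeze_zero_norm' ?_ (hE0.comp hcomp)
      filter_upwards [eventually_ge_atTop (b - 1)] with t ht
      have hm := (hMaster (fun τ => f τ - q τ * y0 (τ - 1)) 1 ‖y0‖ zero_le_one
        (norm_nonneg _) hw0b t ht).2
      have hsf : Summable (fun k : ℕ => Cf (k + (t - a).toNat)) :=
        (summable_nat_add_iff _).mpr hSf
      have hsq : Summable (fun k : ℕ => Cq (k + (t - a).toNat)) :=
        (summable_nat_add_iff _).mpr hSq
      have hsplit : ∑' k : ℕ, (1 * Cf (k + (t - a).toNat) + ‖y0‖ * Cq (k + (t - a).toNat))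
          = (∑' k : ℕ, Cf (k + (t - a).toNat)) + ‖y0‖ * ∑' k : ℕ, Cq (k + (t - a).toNat) := by
        rw [Summable.tsum_add (hsf.mul_left 1) (hsq.mul_left ‖y0‖), tsum_mul_left, tsum_mul_left, one_mul]
      rw [Real.norm_eq_abs]
      calc |Rw ν b p (fun τ => f τ - q τ * y0 (τ - 1)) t|
          ≤ ∑' k : ℕ, (1 * Cf (k + (t - a).toNat) + ‖y0‖ * Cq (k + (t - a).toNat)) := hm
        _ = (∑' k : ℕ, Cf (k + (t - a).toNat)) + ‖y0‖ * ∑' k : ℕ, Cq (k + (t - a).toNat) := hsplit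
    have hMlim : Tendsto (fun t : ℤ =>
        M - Rw ν b p (fun τ => f τ - q τ * y0 (τ - 1)) t) atTop (nhds M) := by
      have h := Filter.Tendsto.sub
        (tendsto_const_nhds : Tendsto (fun _ : ℤ => M) atTop (nhds M)) hRlim
      simpa using h
    apply hMlim.congr'
    filter_upwards [eventually_ge_atTop (b - 1)] with t ht
    exact (hYeq t ht).symm
end
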